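/- arXiv:1210.2124 — 2 statements merged into one kernel-verified Lean document; each statement's English description precedes it below -/
import Mathlib

section
/- Let X be a compact subset of a Banach space E, E₁ a Banach space compactly embedded in E, and L : X → X a map with L(X) = X satisfying ‖L(x₁) - L(x₂)‖_{E₁} ≤ c‖x₁ - x₂‖_E for all x₁, x₂ ∈ X. Then X has finite fractal (box-counting) dimension in E, bounded by H_{1/(4c)}(B_{E₁}(0,1)), the Kolmogorov entropy at scale 1/(4c) of the unit ball of E₁ viewed in E. -/
open Metric Filter

/-- Minimal number of balls of radius `ε` (in the metric space `E`) needed to cover `X`. -/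
noncomputable def coverNum {E : Type*} [MetricSpace E] (ε : ℝ) (X : Set E) : ℕ :=
  sInf {n : ℕ | ∃ s : Finset E, s.card = n ∧ X ⊆ ⋃ c ∈ s, Metric.ball c ε}

/-- Kolmogorov `ε`-entropy: `H_ε(X) = log₂ N_ε(X)`. -/
noncomputable def kEntropy {E : Type*} [MetricSpace E] (ε : ℝ) (X : Set E) : ℝ :=
  Real.logb 2 (coverNum ε X)

/-- Fractal (box-counting) dimension:
`dim_F X = limsup_{ε → 0⁺} H_ε(X) / log₂ ε⁻¹`. -/
noncomputable def fractalDim {E : Type*} [MetricSpace E] (X : Set E) : ℝ :=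
  limsup (fun ε : ℝ => kEntropy ε X / Real.logb 2 ε⁻¹) (nhdsWithin 0 (Set.Ioi 0))

lemma coverSet_nonempty {E : Type*} [MetricSpace E] {X : Set E} (hX : TotallyBounded X)
    {ε : ℝ} (hε : 0 < ε) :
    {n : ℕ | ∃ s : Finset E, s.card = n ∧ X ⊆ ⋃ c ∈ s, Metric.ball c ε}.Nonempty := by
  obtain ⟨t, htf, hts⟩ := (totallyBounded_iff.mp hX) ε hε
  exact ⟨htf.toFinset.card, htf.toFinset, rfl, by simpa [Set.Finite.mem_toFinset] using hts⟩

lemma exists_optimal_cover {E : Type*} [MetricSpace E] {X : Set E} (hX : TotallyBounded X)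
    {ε : ℝ} (hε : 0 < ε) :
    ∃ s : Finset E, s.card = coverNum ε X ∧ X ⊆ ⋃ c ∈ s, Metric.ball c ε :=
  Nat.sInf_mem (coverSet_nonempty hX hε)

lemma coverNum_le_card {E : Type*} [MetricSpace E] {X : Set E} {ε : ℝ} (s : Finset E)
    (h : X ⊆ ⋃ c ∈ s, Metric.ball c ε) : coverNum ε X ≤ s.card :=
  Nat.sInf_le ⟨s, rfl, h⟩

lemma coverNum_anti {E : Type*} [MetricSpace E] {X : Set E} (hX : TotallyBounded X)
    {ε ε' : ℝ} (hε : 0 < ε) (h : ε ≤ ε') : coverNum ε' X ≤ coverNum ε X := by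
  obtain ⟨s, hc, hcov⟩ := exists_optimal_cover hX hε
  rw [← hc]
  exact coverNum_le_card s (hcov.trans (Set.iUnion₂_mono fun c _ => ball_subset_ball h))

lemma one_le_coverNum {E : Type*} [MetricSpace E] {X : Set E} (hX : TotallyBounded X)
    (hne : X.Nonempty) {ε : ℝ} (hε : 0 < ε) : 1 ≤ coverNum ε X := by
  obtain ⟨s, hc, hcov⟩ := exists_optimal_cover hX hε
  rcases hne with ⟨x, hx⟩
  have := hcov hx
  simp only [Set.mem_iUnion] at this
  obtain ⟨c, hcs, -⟩ := this
  rw [← hc]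
  exact Finset.card_pos.mpr ⟨c, hcs⟩

lemma key_step {E E₁ : Type*}
    [NormedAddCommGroup E] [NormedSpace ℝ E] [NormedAddCommGroup E₁] [NormedSpace ℝ E₁]
    (j : E₁ →L[ℝ] E) (X : Set E) (hXtb : TotallyBounded X) (Y : Set E₁) (hYX : j '' Y = X)
    (L : E₁ → E₁) (hLY : L '' Y = Y) (c : ℝ) (hc : 0 < c)
    (hLip : ∀ y₁ ∈ Y, ∀ y₂ ∈ Y, ‖L y₁ - L y₂‖ ≤ c * ‖j y₁ - j y₂‖)
    (t : Finset E) (ht : (j '' Metric.ball 0 1) ⊆ ⋃ b ∈ t, Metric.ball b (1/(4*c)))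
    {ε : ℝ} (hε : 0 < ε) :
    coverNum (ε/2) X ≤ coverNum ε X * t.card := by
  classical
  obtain ⟨s, hscard, hscov⟩ := exists_optimal_cover hXtb hε
  have hsel : ∀ a : E, ∃ z : E₁, ((∃ y ∈ Y, j y ∈ ball a ε) → (z ∈ Y ∧ j z ∈ ball a ε)) := by
    intro a
    by_cases h : ∃ y ∈ Y, j y ∈ ball a ε
    · obtain ⟨y, hy1, hy2⟩ := h
      exact ⟨y, fun _ => ⟨hy1, hy2⟩⟩
    · exact ⟨0, fun h' => absurd h' h⟩
  choose g hg using hsel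
  have h2cε : (0:ℝ) < 2*c*ε := by positivity
  set s' : Finset E := (s ×ˢ t).image (fun p => j (L (g p.1)) + (2*c*ε) • p.2) with hs'
  have hcov : X ⊆ ⋃ a ∈ s', ball a (ε/2) := by
    intro x hx
    rw [← hYX] at hx
    obtain ⟨y', hy', rfl⟩ := hx
    rw [← hLY] at hy'
    obtain ⟨y, hy, rfl⟩ := hy'
    have hjy : (j y : E) ∈ X := hYX ▸ Set.mem_image_of_mem j hy
    have hmem := hscov hjy
    simp only [Set.mem_iUnion, exists_prop] at hmem
    obtain ⟨c₀, hc₀s, hc₀⟩ := hmem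
    obtain ⟨hgY, hgball⟩ := hg c₀ ⟨y, hy, hc₀⟩
    have hdist : ‖j y - j (g c₀)‖ < 2 * ε := by
      have h1 : dist (j y) c₀ < ε := mem_ball.mp hc₀
      have h2 : dist (j (g c₀)) c₀ < ε := mem_ball.mp hgball
      rw [← dist_eq_norm]
      calc dist (j y) (j (g c₀)) ≤ dist (j y) c₀ + dist (j (g c₀)) c₀ := dist_triangle_right _ _ _
        _ < 2 * ε := by linarith
    have hL : ‖L y - L (g c₀)‖ < 2*c*ε :=
      lt_of_le_of_lt (hLip y hy (g c₀) hgY) (by nlinarith)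
    set w := L y - L (g c₀) with hw
    set z := (2*c*ε)⁻¹ • w with hzdef
    have hz : z ∈ ball (0:E₁) 1 := by
      rw [mem_ball, dist_zero_right, hzdef, norm_smul, norm_inv, Real.norm_of_nonneg h2cε.le,
        inv_mul_lt_iff₀ h2cε]
      simpa using hL
    have hjz := ht (Set.mem_image_of_mem j hz)
    simp only [Set.mem_iUnion, exists_prop] at hjz
    obtain ⟨b, hbt, hjzb⟩ := hjz
    refine Set.mem_iUnion₂.mpr ⟨j (L (g c₀)) + (2*c*ε) • b, ?_, ?_⟩
    · exact Finset.mem_image.mpr ⟨(c₀, b), Finset.mem_product.mpr ⟨hc₀s, hbt⟩, rfl⟩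
    · rw [mem_ball, dist_eq_norm]
      have hjw : (2*c*ε) • (j z) = j w := by
        rw [hzdef, map_smul, smul_inv_smul₀ h2cε.ne']
      have heq : j (L y) - (j (L (g c₀)) + (2*c*ε) • b) = (2*c*ε) • (j z - b) := by
        rw [smul_sub, hjw, hw, map_sub]
        abel
      rw [heq, norm_smul, Real.norm_of_nonneg h2cε.le]
      have hb1 : ‖j z - b‖ < 1/(4*c) := by rw [← dist_eq_norm]; exact mem_ball.mp hjzb
      calc (2*c*ε) * ‖j z - b‖ < (2*c*ε) * (1/(4*c)) := mul_lt_mul_of_pos_left hb1 h2cε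
        _ = ε/2 := by field_simp; ring
  calc coverNum (ε/2) X ≤ s'.card := coverNum_le_card s' hcov
    _ ≤ (s ×ˢ t).card := Finset.card_image_le
    _ = s.card * t.card := Finset.card_product s t
    _ = coverNum ε X * t.card := by rw [hscard]

/-- let `X` be a compact subset of a Banach space `E`, `E₁` a Banach space
compactly embedded in `E` (via an injective compact operator `j`), and `L` a map of `X`
onto itself (realized through `j` on a set `Y` with `j '' Y = X`, `L '' Y = Y`) that is
Lipschitz from the `E`-metric to the `E₁`-metric with constant `c`. Then the fractal
dimension of `X` in `E` is bounded by `H_{1/(4c)}(B_{E₁}(0,1))`, the Kolmogorov entropy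
at scale `1/(4c)` of the image in `E` of the unit ball of `E₁`. -/
theorem stmt8 {E E₁ : Type*}
    [NormedAddCommGroup E] [NormedSpace ℝ E] [CompleteSpace E]
    [NormedAddCommGroup E₁] [NormedSpace ℝ E₁] [CompleteSpace E₁]
    (j : E₁ →L[ℝ] E) (hinj : Function.Injective j) (hcpt : IsCompactOperator j)
    (X : Set E) (hX : IsCompact X)
    (Y : Set E₁) (hYX : j '' Y = X)
    (L : E₁ → E₁) (hLY : L '' Y = Y)
    (c : ℝ) (hc : 0 < c)
    (hLip : ∀ y₁ ∈ Y, ∀ y₂ ∈ Y, ‖L y₁ - L y₂‖ ≤ c * ‖j y₁ - j y₂‖) :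
    fractalDim X ≤ kEntropy (1 / (4 * c)) (j '' Metric.ball 0 1) := by
  have hr : (0:ℝ) < 1/(4*c) := by positivity
  have hBtb : TotallyBounded (j '' Metric.ball (0:E₁) 1) := by
    have hK : IsCompact (closure (j '' Metric.ball (0:E₁) 1)) :=
      IsCompactOperator.isCompact_closure_image_ball (f := (j : E₁ →ₗ[ℝ] E)) hcpt 1
    exact hK.totallyBounded.subset subset_closure
  have hBne : (j '' Metric.ball (0:E₁) 1).Nonempty :=
    ⟨j 0, Set.mem_image_of_mem j (mem_ball_self one_pos)⟩
  set N₀ := coverNum (1/(4*c)) (j '' Metric.ball (0:E₁) 1) with hN₀def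
  have hN₀ : 1 ≤ N₀ := one_le_coverNum hBtb hBne hr
  have hH₀eq : kEntropy (1/(4*c)) (j '' Metric.ball (0:E₁) 1) = Real.logb 2 N₀ := rfl
  set H₀ := Real.logb 2 (N₀ : ℝ) with hH₀def
  have hH₀ : 0 ≤ H₀ := Real.logb_nonneg one_lt_two (by exact_mod_cast hN₀)
  rw [hH₀eq]
  rcases Set.eq_empty_or_nonempty X with hXe | hXe
  · -- empty case
    subst hXe
    have hk : ∀ ε : ℝ, kEntropy ε (∅ : Set E) = 0 := by
      intro ε
      have h0 : coverNum ε (∅ : Set E) = 0 :=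
        Nat.sInf_eq_zero.mpr (Or.inl ⟨∅, by simp⟩)
      simp [kEntropy, h0]
    have : fractalDim (∅ : Set E) = 0 := by
      simp only [fractalDim, hk, zero_div]
      exact limsup_const 0
    rw [this]; exact hH₀
  · obtain ⟨t, htcard, htcov⟩ := exists_optimal_cover hBtb hr
    have hXtb : TotallyBounded X := hX.totallyBounded
    have key : ∀ ε : ℝ, 0 < ε → coverNum (ε/2) X ≤ coverNum ε X * N₀ := by
      intro ε hε
      rw [hN₀def, ← htcard]
      exact key_step j X hXtb Y hYX L hLY c hc hLip t htcov hε
    have iter : ∀ k : ℕ, coverNum ((1/2 : ℝ) / 2^k) X ≤ coverNum (1/2 : ℝ) X * N₀ ^ k := by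
      intro k
      induction k with
      | zero => simp
      | succ k ih =>
        have h2 : (1/2 : ℝ)/2^(k+1) = ((1/2 : ℝ)/2^k)/2 := by ring
        have hpos : (0:ℝ) < (1/2 : ℝ)/2^k := by positivity
        rw [h2]
        calc coverNum (((1/2:ℝ)/2^k)/2) X ≤ coverNum ((1/2:ℝ)/2^k) X * N₀ := key _ hpos
          _ ≤ (coverNum (1/2 : ℝ) X * N₀^k) * N₀ := Nat.mul_le_mul_right _ ih
          _ = coverNum (1/2 : ℝ) X * N₀^(k+1) := by ring
    set C := coverNum (1/2 : ℝ) X with hCdef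
    have hC1 : 1 ≤ C := one_le_coverNum hXtb hXe one_half_pos
    have hLC : 0 ≤ Real.logb 2 (C : ℝ) := Real.logb_nonneg one_lt_two (by exact_mod_cast hC1)
    have hev : ∀ δ : ℝ, 0 < δ → ∀ᶠ ε in nhdsWithin (0:ℝ) (Set.Ioi 0),
        kEntropy ε X / Real.logb 2 ε⁻¹ ≤ H₀ + δ := by
      intro δ hδ
      set K := ⌈Real.logb 2 (C:ℝ) / δ⌉₊ with hKdef
      have hmem : Set.Ioo (0:ℝ) ((1/2)/2^K) ∈ nhdsWithin (0:ℝ) (Set.Ioi 0) :=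
        Ioo_mem_nhdsGT_of_mem ⟨le_refl 0, by positivity⟩
      filter_upwards [hmem] with ε hε
      obtain ⟨hε0, hεK⟩ := hε
      set x := (1/2 : ℝ)/ε with hxdef
      have hx0 : (0:ℝ) < x := by positivity
      have hxK : (2:ℝ)^K < x := by
        have h1 : ε * 2^K < 1/2 := (lt_div_iff₀ (by positivity : (0:ℝ) < 2^K)).mp hεK
        rw [hxdef, lt_div_iff₀ hε0]
        nlinarith
      have hx1 : (1:ℝ) ≤ x := le_of_lt (lt_of_le_of_lt (one_le_pow₀ one_le_two) hxK)
      have hlogx0 : 0 ≤ Real.logb 2 x := Real.logb_nonneg one_lt_two hx1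
      set k := ⌊Real.logb 2 x⌋₊ with hkdef
      have hkK : K ≤ k := by
        apply Nat.le_floor
        rw [Real.le_logb_iff_rpow_le one_lt_two hx0, Real.rpow_natCast]
        exact hxK.le
      have hk1 : (2:ℝ)^k ≤ x := by
        have h1 : (k:ℝ) ≤ Real.logb 2 x := Nat.floor_le hlogx0
        have h2 := (Real.le_logb_iff_rpow_le one_lt_two hx0).mp h1
        rwa [Real.rpow_natCast] at h2
      have hk2 : x < 2^(k+1) := by
        have h1 : Real.logb 2 x < (k:ℝ) + 1 := Nat.lt_floor_add_one _
        have h2 := (Real.logb_lt_iff_lt_rpow one_lt_two hx0).mp h1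
        rw [show ((k:ℝ)+1) = ((k+1 : ℕ) : ℝ) by push_cast; ring, Real.rpow_natCast] at h2
        exact h2
      have hεup : ε ≤ (1/2 : ℝ)/2^k := by
        rw [le_div_iff₀ (by positivity : (0:ℝ) < 2^k)]
        have := (le_div_iff₀ hε0).mp hk1
        nlinarith
      have hεlow : (1/2 : ℝ)/2^(k+1) ≤ ε := by
        rw [div_le_iff₀ (by positivity : (0:ℝ) < 2^(k+1))]
        have := (div_lt_iff₀ hε0).mp hk2
        nlinarith
      have hεlowpos : (0:ℝ) < (1/2 : ℝ)/2^(k+1) := by positivity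
      have hcov1 : coverNum ε X ≤ C * N₀^(k+1) :=
        (coverNum_anti hXtb hεlowpos hεlow).trans (iter (k+1))
      have hcovpos : 1 ≤ coverNum ε X := one_le_coverNum hXtb hXe hε0
      have hAle : kEntropy ε X ≤ Real.logb 2 (C:ℝ) + ((k:ℝ)+1)*H₀ := by
        have h1 : Real.logb 2 ((coverNum ε X : ℕ) : ℝ) ≤ Real.logb 2 ((C * N₀^(k+1) : ℕ) : ℝ) := by
          apply (Real.logb_le_logb one_lt_two (by exact_mod_cast hcovpos)
            (by exact_mod_cast Nat.one_le_iff_ne_zero.mp (le_trans hcovpos hcov1) |>.bot_lt)).mpr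
          exact_mod_cast hcov1
        calc kEntropy ε X ≤ Real.logb 2 ((C * N₀^(k+1) : ℕ) : ℝ) := h1
          _ = Real.logb 2 (C:ℝ) + ((k:ℝ)+1)*H₀ := by
            push_cast
            rw [Real.logb_mul (by positivity) (by positivity), Real.logb_pow]
            push_cast
            ring
      have hA0 : 0 ≤ kEntropy ε X := Real.logb_nonneg one_lt_two (by exact_mod_cast hcovpos)
      have hεinv : (2:ℝ)^(k+1) ≤ ε⁻¹ := by
        rw [le_inv_comm₀ (by positivity) hε0]
        calc ε ≤ (1/2:ℝ)/2^k := hεup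
          _ = ((2:ℝ)^(k+1))⁻¹ := by rw [pow_succ]; field_simp
      have hBlog : ((k:ℝ)+1) ≤ Real.logb 2 ε⁻¹ := by
        have h1 : Real.logb 2 ((2:ℝ)^(k+1)) ≤ Real.logb 2 ε⁻¹ :=
          (Real.logb_le_logb one_lt_two (by positivity) (by positivity)).mpr hεinv
        rwa [Real.logb_pow, Real.logb_self_eq_one one_lt_two, mul_one,
          Nat.cast_add, Nat.cast_one] at h1
      have hkpos : (0:ℝ) < (k:ℝ)+1 := by positivity
      have hnum0 : 0 ≤ Real.logb 2 (C:ℝ) + ((k:ℝ)+1)*H₀ := by positivity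
      have hmain : kEntropy ε X / Real.logb 2 ε⁻¹ ≤
          (Real.logb 2 (C:ℝ) + ((k:ℝ)+1)*H₀) / ((k:ℝ)+1) :=
        div_le_div₀ hnum0 hAle hkpos hBlog
      refine hmain.trans ?_
      have heq : (Real.logb 2 (C:ℝ) + ((k:ℝ)+1)*H₀) / ((k:ℝ)+1)
          = Real.logb 2 (C:ℝ)/((k:ℝ)+1) + H₀ := by field_simp
      rw [heq]
      have hfin : Real.logb 2 (C:ℝ) / ((k:ℝ)+1) ≤ δ := by
        rw [div_le_iff₀ hkpos]
        have h1 : Real.logb 2 (C:ℝ) / δ ≤ (K:ℝ) := Nat.le_ceil _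
        have h2 : Real.logb 2 (C:ℝ) ≤ (K:ℝ) * δ := (div_le_iff₀ hδ).mp h1
        have h3 : (K:ℝ) ≤ (k:ℝ) := by exact_mod_cast hkK
        calc Real.logb 2 (C:ℝ) ≤ (K:ℝ) * δ := h2
          _ ≤ ((k:ℝ)+1) * δ := mul_le_mul_of_nonneg_right (h3.trans (le_add_of_nonneg_right zero_le_one)) hδ.le
          _ = δ * ((k:ℝ)+1) := mul_comm _ _
      rw [add_comm H₀ δ]
      exact add_le_add_left hfin H₀
    have hlow : ∀ᶠ ε in nhdsWithin (0:ℝ) (Set.Ioi 0),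
        (0:ℝ) ≤ kEntropy ε X / Real.logb 2 ε⁻¹ := by
      filter_upwards [Ioo_mem_nhdsGT_of_mem (Set.left_mem_Ico.mpr one_pos)] with ε hε
      obtain ⟨hε0, hε1⟩ := hε
      apply div_nonneg
      · exact Real.logb_nonneg one_lt_two (by exact_mod_cast one_le_coverNum hXtb hXe hε0)
      · exact Real.logb_nonneg one_lt_two ((one_le_inv₀ hε0).mpr hε1.le)
    apply le_of_forall_pos_le_add
    intro δ hδ
    exact limsup_le_of_le (isCoboundedUnder_le_of_eventually_le _ hlow) (hev δ hδ)
end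

section
/- If a closed semigroup Σ(t) on a metric space possesses a connected compact attracting set K with Σ(t)K ⊆ K for all sufficiently large t, then Σ(t) has a connected global attractor A ⊆ K (the global attractor is the ω-limit set of K: compact, invariant, and attracting all bounded sets). -/
open Filter

lemma near_compact_subseq {X : Type*} [MetricSpace X] {K : Set X} (hK : IsCompact K)
    (hne : K.Nonempty) (p : ℕ → X)
    (h : ∀ ε > 0, ∃ N : ℕ, ∀ n ≥ N, ∃ k ∈ K, dist (p n) k < ε) :
    ∃ y ∈ K, ∃ φ : ℕ → ℕ, StrictMono φ ∧ Tendsto (p ∘ φ) atTop (nhds y) := by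
  have hk : ∀ n : ℕ, ∃ k ∈ K, Metric.infDist (p n) K = dist (p n) k :=
    fun n => hK.exists_infDist_eq_dist hne (p n)
  choose k hkK hkd using hk
  obtain ⟨y, hyK, φ, hφ, hklim⟩ := hK.tendsto_subseq hkK
  refine ⟨y, hyK, φ, hφ, Metric.tendsto_atTop.2 ?_⟩
  intro ε hε
  obtain ⟨N₁, hN₁⟩ := h (ε/2) (by positivity)
  obtain ⟨N₂, hN₂⟩ := Metric.tendsto_atTop.1 hklim (ε/2) (by positivity)
  refine ⟨max N₁ N₂, fun n hn => ?_⟩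
  have h1 : dist (p (φ n)) (k (φ n)) < ε/2 := by
    rw [← hkd]
    obtain ⟨k', hk', hd'⟩ := hN₁ (φ n) (le_trans (le_trans (le_max_left _ _) hn) (hφ.le_apply))
    exact lt_of_le_of_lt (Metric.infDist_le_dist_of_mem hk') hd'
  calc dist ((p ∘ φ) n) y ≤ dist (p (φ n)) (k (φ n)) + dist (k (φ n)) y := dist_triangle _ _ _
    _ < ε/2 + ε/2 := add_lt_add h1 (hN₂ n (le_trans (le_max_right _ _) hn))
    _ = ε := by ring

/-- a closed semigroup on a complete metric space possessing a connected
compact attracting set `K` with `Σ(t)K ⊆ K` for all sufficiently large `t` has a connected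
global attractor `A ⊆ K`: a compact, connected, fully invariant set attracting all
bounded sets, and minimal among compact attracting sets. -/
theorem stmt19 {X : Type*} [MetricSpace X] [CompleteSpace X]
    (S : ℝ → X → X)
    (hid : S 0 = id)
    (hsemi : ∀ s ≥ (0 : ℝ), ∀ t ≥ (0 : ℝ), S (s + t) = S s ∘ S t)
    (hclosed : ∀ t ≥ (0 : ℝ), ∀ (u : ℕ → X) (x y : X),
      Tendsto u atTop (nhds x) →
      Tendsto (fun n => S t (u n)) atTop (nhds y) → S t x = y)
    (K : Set X) (hKc : IsCompact K) (hKconn : IsConnected K)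
    (hattr : ∀ B : Set X, Bornology.IsBounded B → ∀ ε > 0, ∃ T, ∀ t ≥ T,
      ∀ x ∈ B, ∃ k ∈ K, dist (S t x) k < ε)
    (hinv : ∃ T, ∀ t ≥ T, S t '' K ⊆ K) :
    ∃ A ⊆ K, IsCompact A ∧ IsConnected A ∧ (∀ t ≥ (0 : ℝ), S t '' A = A) ∧
      (∀ B : Set X, Bornology.IsBounded B → ∀ ε > 0, ∃ T, ∀ t ≥ T,
        ∀ x ∈ B, ∃ a ∈ A, dist (S t x) a < ε) ∧
      (∀ A' : Set X, IsCompact A' →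
        (∀ B : Set X, Bornology.IsBounded B → ∀ ε > 0, ∃ T, ∀ t ≥ T,
          ∀ x ∈ B, ∃ a ∈ A', dist (S t x) a < ε) → A ⊆ A') := by
  obtain ⟨T', hT'⟩ := hinv
  set T₀ : ℝ := max T' 0 with hT₀def
  have hT₀0 : (0:ℝ) ≤ T₀ := le_max_right _ _
  have hinv' : ∀ t ≥ T₀, ∀ k ∈ K, S t k ∈ K :=
    fun t ht k hk => hT' t (le_trans (le_max_left _ _) ht) ⟨k, hk, rfl⟩
  have hKne : K.Nonempty := hKconn.nonempty
  set A : Set X := {x | ∀ ε > 0, ∀ τ : ℝ, ∃ s ≥ τ, ∃ k ∈ K, dist (S s k) x < ε} with hAdef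
  -- A ⊆ K
  have hAK : A ⊆ K := by
    intro x hx
    rw [← hKc.isClosed.closure_eq]
    rw [Metric.mem_closure_iff]
    intro ε hε
    obtain ⟨s, hs, k, hk, hd⟩ := hx ε hε T₀
    exact ⟨S s k, hinv' s hs k hk, by rwa [dist_comm]⟩
  -- A closed, compact
  have hAcl : IsClosed A := by
    refine isClosed_of_closure_subset ?_
    intro x hx ε hε τ
    obtain ⟨x', hx', hd⟩ := Metric.mem_closure_iff.1 hx (ε/2) (by positivity)
    obtain ⟨s, hs, k, hk, hd2⟩ := hx' (ε/2) (by positivity) τ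
    refine ⟨s, hs, k, hk, ?_⟩
    calc dist (S s k) x ≤ dist (S s k) x' + dist x' x := dist_triangle _ _ _
      _ < ε/2 + ε/2 := add_lt_add hd2 (by rwa [dist_comm] at hd)
      _ = ε := by ring
  have hAcomp : IsCompact A := hKc.of_isClosed_subset hAcl hAK
  -- membership criterion from sequences
  have hmemA : ∀ (t : ℕ → ℝ) (q : ℕ → X) (y : X), (∀ n : ℕ, (n:ℝ) ≤ t n) →
      (∀ n, q n ∈ S (t n) '' K) → Tendsto q atTop (nhds y) → y ∈ A := by
    intro t q y ht hq hlim ε hε τ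
    obtain ⟨N, hN⟩ := Metric.tendsto_atTop.1 hlim ε hε
    obtain ⟨m, hm⟩ := exists_nat_ge τ
    obtain ⟨k, hk, hqk⟩ := hq (max N m)
    refine ⟨t (max N m), le_trans (le_trans hm ?_) (ht _), k, hk, ?_⟩
    · exact_mod_cast le_max_right N m
    · rw [hqk]; exact hN _ (le_max_left _ _)
  -- extracting sequences from membership
  have hseqA : ∀ a ∈ A, ∀ c : ℝ, ∃ (s : ℕ → ℝ) (k : ℕ → X), (∀ n : ℕ, c + n ≤ s n) ∧
      (∀ n, k n ∈ K) ∧ Tendsto (fun n => S (s n) (k n)) atTop (nhds a) := by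
    intro a ha c
    have h : ∀ n : ℕ, ∃ s ≥ c + n, ∃ k ∈ K, dist (S s k) a < 1/(n+1) :=
      fun n => ha (1/(n+1)) (by positivity) (c + n)
    choose s hs k hk hd using h
    refine ⟨s, k, hs, hk, Metric.tendsto_atTop.2 ?_⟩
    intro ε hε
    obtain ⟨N, hN⟩ := exists_nat_one_div_lt hε
    refine ⟨N, fun n hn => lt_of_lt_of_le (lt_of_lt_of_le (hd n) ?_) hN.le⟩
    apply one_div_le_one_div_of_le (by positivity)
    have : (N:ℝ) ≤ n := by exact_mod_cast hn
    linarith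
  -- nonempty
  have hAne : A.Nonempty := by
    obtain ⟨k₀, hk₀⟩ := hKne
    have hq : ∀ n : ℕ, S (T₀ + n) k₀ ∈ K := fun n => hinv' _ (le_add_of_nonneg_right (Nat.cast_nonneg n)) k₀ hk₀
    obtain ⟨y, hyK, φ, hφ, hlim⟩ := hKc.tendsto_subseq hq
    refine ⟨y, hmemA (fun n => T₀ + φ n) _ y (fun n => ?_) (fun n => ⟨k₀, hk₀, rfl⟩) hlim⟩
    have : (n:ℝ) ≤ φ n := by exact_mod_cast hφ.le_apply
    show (n:ℝ) ≤ T₀ + (φ n : ℝ)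
    linarith
  -- subsequence of convergent converges
  have hsub : ∀ (u : ℕ → X) (x : X) (φ : ℕ → ℕ), StrictMono φ →
      Tendsto u atTop (nhds x) → Tendsto (fun n => u (φ n)) atTop (nhds x) :=
    fun u x φ hφ h => h.comp hφ.tendsto_atTop
  -- invariance
  have hinvA : ∀ t ≥ (0:ℝ), S t '' A = A := by
    intro t ht
    apply Set.Subset.antisymm
    · rintro _ ⟨a, ha, rfl⟩
      obtain ⟨s, k, hs, hk, hlim⟩ := hseqA a ha T₀
      have hs0 : ∀ n : ℕ, (0:ℝ) ≤ s n := fun n => le_trans (by positivity) (hs n)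
      have hsT₀ : ∀ n : ℕ, T₀ ≤ s n := fun n => le_trans (le_add_of_nonneg_right (Nat.cast_nonneg n)) (hs n)
      have hp : ∀ n : ℕ, S (t + s n) (k n) ∈ K := fun n =>
        hinv' _ (le_add_of_nonneg_left ht |>.trans' (hsT₀ n) |>.trans (le_refl _) |> fun h => h) (k n) (hk n)
      obtain ⟨y, hyK, φ, hφ, hplim⟩ := hKc.tendsto_subseq hp
      have hcomp : ∀ n, S (t + s n) (k n) = S t (S (s n) (k n)) := fun n => by
        rw [hsemi t ht (s n) (hs0 n)]; rfl
      have hSta : S t a = y := by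
        refine hclosed t ht (fun n => S (s (φ n)) (k (φ n))) a y (hsub _ _ φ hφ hlim) ?_
        refine hplim.congr fun n => ?_
        simp only [Function.comp_apply, hcomp]
      rw [hSta]
      refine hmemA (fun n => t + s (φ n)) _ y (fun n => ?_) (fun n => ⟨k (φ n), hk (φ n), rfl⟩) hplim
      have h1 : (n:ℝ) ≤ φ n := by exact_mod_cast hφ.le_apply
      have := hs (φ n)
      show (n:ℝ) ≤ t + s (φ n)
      linarith
    · intro a ha
      obtain ⟨s, k, hs, hk, hlim⟩ := hseqA a ha (T₀ + t)
      have hst : ∀ n : ℕ, T₀ + n ≤ s n - t := fun n => by have := hs n; linarith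
      have hsT₀ : ∀ n : ℕ, T₀ ≤ s n - t := fun n => le_trans (le_add_of_nonneg_right (Nat.cast_nonneg n)) (hst n)
      have hz : ∀ n : ℕ, S (s n - t) (k n) ∈ K := fun n => hinv' _ (hsT₀ n) (k n) (hk n)
      obtain ⟨b, hbK, φ, hφ, hzlim⟩ := hKc.tendsto_subseq hz
      have hbA : b ∈ A := by
        refine hmemA (fun n => s (φ n) - t) _ b (fun n => ?_) (fun n => ⟨k (φ n), hk (φ n), rfl⟩) hzlim
        have h1 : (n:ℝ) ≤ φ n := by exact_mod_cast hφ.le_apply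
        have := hst (φ n)
        show (n:ℝ) ≤ s (φ n) - t
        linarith
      have hcomp : ∀ n : ℕ, S t (S (s n - t) (k n)) = S (s n) (k n) := fun n => by
        have h0 : (0:ℝ) ≤ s n - t := le_trans hT₀0 (hsT₀ n)
        have := hsemi t ht (s n - t) h0
        calc S t (S (s n - t) (k n)) = S (t + (s n - t)) (k n) := by rw [this]; rfl
          _ = S (s n) (k n) := by ring_nf
      have : S t b = a := by
        refine hclosed t ht (fun n => S (s (φ n) - t) (k (φ n))) b a hzlim ?_
        refine (hsub _ _ φ hφ hlim).congr fun n => ?_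
        exact (hcomp (φ n)).symm
      exact ⟨b, hbA, this⟩
  -- attraction
  have hattrA : ∀ B : Set X, Bornology.IsBounded B → ∀ ε > 0, ∃ T, ∀ t ≥ T,
      ∀ x ∈ B, ∃ a ∈ A, dist (S t x) a < ε := by
    intro B hB ε hε
    by_contra hcon
    push_neg at hcon
    have h1 : ∀ n : ℕ, ∃ t ≥ (n:ℝ), ∃ x ∈ B, ∀ a ∈ A, ε ≤ dist (S t x) a := fun n => hcon n
    choose t ht x hx hfar using h1
    set q : ℕ → X := fun n => S (t n) (x n) with hqdef
    have hnear : ∀ ε' > 0, ∃ N : ℕ, ∀ n ≥ N, ∃ k ∈ K, dist (q n) k < ε' := by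
      intro ε' hε'
      obtain ⟨T1, hT1⟩ := hattr B hB ε' hε'
      obtain ⟨N, hN⟩ := exists_nat_ge T1
      refine ⟨N, fun n hn => hT1 (t n) (le_trans (le_trans hN ?_) (ht n)) (x n) (hx n)⟩
      exact_mod_cast hn
    obtain ⟨y, hyK, φ, hφ, hqlim⟩ := near_compact_subseq hKc hKne q hnear
    have hyA : y ∈ A := by
      intro ε' hε' τ
      set s : ℝ := max τ T₀ with hsdef
      have hs0 : (0:ℝ) ≤ s := le_trans hT₀0 (le_max_right _ _)
      obtain ⟨N₀, hN₀⟩ := exists_nat_ge s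
      set m : ℕ → ℕ := fun n => φ (n + N₀) with hmdef
      set z : ℕ → X := fun n => S (t (m n) - s) (x (m n)) with hzdef
      have htm : ∀ n : ℕ, (n:ℝ) ≤ t (m n) - s := by
        intro n
        have h1 : ((n + N₀ : ℕ):ℝ) ≤ t (m n) := le_trans (by exact_mod_cast hφ.le_apply) (ht _)
        have h2 : ((n + N₀ : ℕ):ℝ) = (n:ℝ) + (N₀:ℝ) := by push_cast; ring
        linarith [hN₀]
      have hznear : ∀ ε'' > 0, ∃ N : ℕ, ∀ n ≥ N, ∃ k ∈ K, dist (z n) k < ε'' := by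
        intro ε'' hε''
        obtain ⟨T2, hT2⟩ := hattr B hB ε'' hε''
        obtain ⟨N, hN⟩ := exists_nat_ge T2
        refine ⟨N, fun n hn => hT2 _ (le_trans (le_trans hN ?_) (htm n)) (x (m n)) (hx (m n))⟩
        exact_mod_cast hn
      obtain ⟨w, hwK, ψ, hψ, hzlim⟩ := near_compact_subseq hKc hKne z hznear
      have hSz : ∀ n : ℕ, S s (z (ψ n)) = q (m (ψ n)) := by
        intro n
        have h0t : (0:ℝ) ≤ t (m (ψ n)) - s := le_trans (Nat.cast_nonneg _) (htm (ψ n))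
        have h3 := hsemi s hs0 (t (m (ψ n)) - s) h0t
        have : S (s + (t (m (ψ n)) - s)) (x (m (ψ n))) = S s (S (t (m (ψ n)) - s) (x (m (ψ n)))) := by
          rw [h3]; rfl
        rw [hzdef, hqdef]
        simp only []
        rw [← this]
        congr 1
        ring
      have hq2 : Tendsto (fun n => q (m (ψ n))) atTop (nhds y) := by
        have hmono : Tendsto (fun n => ψ n + N₀) atTop atTop :=
          tendsto_atTop_mono (fun n => Nat.le_add_right _ _) hψ.tendsto_atTop
        exact hqlim.comp hmono
      have hSw : S s w = y := by
        refine hclosed s hs0 (fun n => z (ψ n)) w y hzlim ?_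
        refine hq2.congr fun n => (hSz n).symm
      exact ⟨s, le_max_left _ _, w, hwK, by rw [hSw]; simpa using hε'⟩
    obtain ⟨N, hN⟩ := Metric.tendsto_atTop.1 hqlim ε hε
    exact absurd (hN N le_rfl) (not_lt.2 (hfar (φ N) y hyA))
  -- connectedness
  have hAprecon : IsPreconnected A := by
    intro U V hU hV hUV hAU hAV
    by_contra hcon
    rw [Set.not_nonempty_iff_eq_empty] at hcon
    have hnotUV : ∀ a ∈ A, a ∈ U → a ∈ V → False := fun a ha h1 h2 =>
      Set.eq_empty_iff_forall_notMem.1 hcon a ⟨ha, h1, h2⟩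
    set A₁ : Set X := A \ V with hA1
    set A₂ : Set X := A \ U with hA2
    have hA₁cl : IsClosed A₁ := hAcl.sdiff hV
    have hA₂cl : IsClosed A₂ := hAcl.sdiff hU
    have hA₁c : IsCompact A₁ := hAcomp.of_isClosed_subset hA₁cl Set.diff_subset
    have hA₂c : IsCompact A₂ := hAcomp.of_isClosed_subset hA₂cl Set.diff_subset
    have hA₁ne : A₁.Nonempty := by
      obtain ⟨a, haA, haU⟩ := hAU
      exact ⟨a, haA, fun hV' => hnotUV a haA haU hV'⟩
    have hA₂ne : A₂.Nonempty := by
      obtain ⟨a, haA, haV⟩ := hAV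
      exact ⟨a, haA, fun hU' => hnotUV a haA hU' haV⟩
    have hdisj : ∀ p ∈ A₁, p ∉ A₂ := by
      intro p hp hp2
      rcases hUV hp.1 with h | h
      · exact hp2.2 h
      · exact hp.2 h
    obtain ⟨p₀, hp₀, hm'⟩ := hA₁c.exists_isMinOn hA₁ne
      (Metric.continuous_infDist_pt A₂).continuousOn
    have hm : ∀ p ∈ A₁, Metric.infDist p₀ A₂ ≤ Metric.infDist p A₂ := fun p hp => hm' hp
    set δ : ℝ := Metric.infDist p₀ A₂ with hδdef
    have hδ : 0 < δ := (hA₂cl.notMem_iff_infDist_pos hA₂ne).1 (hdisj p₀ hp₀)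
    have hsep : ∀ p ∈ A₁, ∀ q ∈ A₂, δ ≤ dist p q := fun p hp q hq =>
      le_trans (hm p hp) (Metric.infDist_le_dist_of_mem hq)
    obtain ⟨T₂, hT₂⟩ := hattrA K hKc.isBounded (δ/3) (by positivity)
    set t : ℝ := max T₂ T₀ with htdef
    have htT₀ : T₀ ≤ t := le_max_right _ _
    have ht0 : (0:ℝ) ≤ t := le_trans hT₀0 htT₀
    have hCcl : ∀ Ai : Set X, IsClosed {k | k ∈ K ∧ Metric.infDist (S t k) Ai ≤ δ/3} := by
      intro Ai
      apply IsSeqClosed.isClosed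
      intro u p hu hup
      have hpK : p ∈ K := hKc.isClosed.mem_of_tendsto hup (Eventually.of_forall fun n => (hu n).1)
      have hSu : ∀ n, S t (u n) ∈ K := fun n => hinv' t htT₀ (u n) (hu n).1
      obtain ⟨y, hyK, φ, hφ, hylim⟩ := hKc.tendsto_subseq hSu
      have hSp : S t p = y :=
        hclosed t ht0 (fun n => u (φ n)) p y (hsub u p φ hφ hup) (by exact hylim)
      refine ⟨hpK, ?_⟩
      rw [hSp]
      refine le_of_tendsto (((Metric.continuous_infDist_pt Ai).tendsto y).comp hylim)
        (Eventually.of_forall fun n => ?_)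
      exact (hu (φ n)).2
    have hCun : ∀ k ∈ K, k ∈ {k | k ∈ K ∧ Metric.infDist (S t k) A₁ ≤ δ/3} ∪
        {k | k ∈ K ∧ Metric.infDist (S t k) A₂ ≤ δ/3} := by
      intro k hk
      obtain ⟨a, haA, had⟩ := hT₂ t (le_max_left _ _) k hk
      have : a ∈ A₁ ∨ a ∈ A₂ := by
        by_cases hV' : a ∈ V
        · exact Or.inr ⟨haA, fun hU' => hnotUV a haA hU' hV'⟩
        · exact Or.inl ⟨haA, hV'⟩
      rcases this with h | h
      · exact Or.inl ⟨hk, le_of_lt (lt_of_le_of_lt (Metric.infDist_le_dist_of_mem h) had)⟩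
      · exact Or.inr ⟨hk, le_of_lt (lt_of_le_of_lt (Metric.infDist_le_dist_of_mem h) had)⟩
    have hCdisj : ∀ k, k ∈ {k | k ∈ K ∧ Metric.infDist (S t k) A₁ ≤ δ/3} →
        k ∈ {k | k ∈ K ∧ Metric.infDist (S t k) A₂ ≤ δ/3} → False := by
      intro k h1 h2
      obtain ⟨a₁, ha₁, hd₁⟩ := hA₁c.exists_infDist_eq_dist hA₁ne (S t k)
      obtain ⟨a₂, ha₂, hd₂⟩ := hA₂c.exists_infDist_eq_dist hA₂ne (S t k)
      have hc : dist a₁ a₂ ≤ 2*δ/3 := by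
        have e1 : dist (S t k) a₁ ≤ δ/3 := by rw [← hd₁]; exact h1.2
        have e2 : dist (S t k) a₂ ≤ δ/3 := by rw [← hd₂]; exact h2.2
        calc dist a₁ a₂ ≤ dist a₁ (S t k) + dist (S t k) a₂ := dist_triangle _ _ _
          _ ≤ δ/3 + δ/3 := add_le_add (by rwa [dist_comm]) e2
          _ = 2*δ/3 := by ring
      have := hsep a₁ ha₁ a₂ ha₂
      linarith
    have hCne : ∀ Ai : Set X, Ai ⊆ A → Ai.Nonempty →
        Set.Nonempty {k | k ∈ K ∧ Metric.infDist (S t k) Ai ≤ δ/3} := by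
      intro Ai hAiA ⟨a, ha⟩
      have : a ∈ S t '' A := (hinvA t ht0).symm ▸ hAiA ha
      obtain ⟨b, hbA, hba⟩ := this
      refine ⟨b, hAK hbA, ?_⟩
      rw [hba, Metric.infDist_zero_of_mem ha]
      positivity
    obtain ⟨k, hkK, hk2, hk1⟩ := hKconn.isPreconnected
      {k | k ∈ K ∧ Metric.infDist (S t k) A₂ ≤ δ/3}ᶜ
      {k | k ∈ K ∧ Metric.infDist (S t k) A₁ ≤ δ/3}ᶜ
      (hCcl A₂).isOpen_compl (hCcl A₁).isOpen_compl
      (fun k hk => by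
        by_cases h2 : k ∈ {k | k ∈ K ∧ Metric.infDist (S t k) A₂ ≤ δ/3}
        · exact Or.inr (fun h1 => hCdisj k h1 h2)
        · exact Or.inl h2)
      (by
        obtain ⟨b, hb⟩ := hCne A₁ Set.diff_subset hA₁ne
        exact ⟨b, hb.1, fun h2 => hCdisj b hb h2⟩)
      (by
        obtain ⟨b, hb⟩ := hCne A₂ Set.diff_subset hA₂ne
        exact ⟨b, hb.1, fun h1 => hCdisj b h1 hb⟩)
    rcases hCun k hkK with h | h
    · exact hk1 h
    · exact hk2 h
  -- minimality
  have hmin : ∀ A' : Set X, IsCompact A' →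
      (∀ B : Set X, Bornology.IsBounded B → ∀ ε > 0, ∃ T, ∀ t ≥ T,
        ∀ x ∈ B, ∃ a ∈ A', dist (S t x) a < ε) → A ⊆ A' := by
    intro A' hA'c hA'attr a ha
    rw [← hA'c.isClosed.closure_eq, Metric.mem_closure_iff]
    intro ε hε
    obtain ⟨T, hT⟩ := hA'attr K hKc.isBounded ε hε
    set t : ℝ := max T 0 with htdef
    have : a ∈ S t '' A := (hinvA t (le_max_right _ _)).symm ▸ ha
    obtain ⟨b, hbA, hba⟩ := this
    obtain ⟨a', ha', hd⟩ := hT t (le_max_left _ _) b (hAK hbA)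
    exact ⟨a', ha', by rw [← hba]; exact hd⟩
  exact ⟨A, hAK, hAcomp, ⟨hAne, hAprecon⟩, hinvA, hattrA, hmin⟩
end
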